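/- Let V be a finite-dimensional vector space, B_j : V → V_j linear maps, and p ∈ [0,1]^m with ∑_j p_j dim(B_j V) = dim V and dim W ≥ ∑_j p_j dim(B_j W) for all subspaces W. If p is an extreme point of this polytope and no nontrivial proper subspace W satisfies dim W = ∑_j p_j dim(B_j W), then p ∈ {0,1}^m. -/

import Mathlib

open Module

lemma aux_pos_lb (s : Set ℝ) (hs : s.Finite) : ∃ δ > 0, ∀ x ∈ s, 0 < x → δ ≤ x := by
  classical
  by_cases h : (hs.toFinset.filter (fun x => 0 < x)).Nonempty
  · refine ⟨(hs.toFinset.filter (fun x => 0 < x)).min' h, ?_, ?_⟩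
    · exact (Finset.mem_filter.mp ((hs.toFinset.filter (fun x => 0 < x)).min'_mem h)).2
    · intro x hx hxpos
      exact Finset.min'_le _ x (Finset.mem_filter.mpr ⟨hs.mem_toFinset.mpr hx, hxpos⟩)
  · refine ⟨1, one_pos, fun x hx hxpos => absurd ⟨x, ?_⟩ h⟩
    exact Finset.mem_filter.mpr ⟨hs.mem_toFinset.mpr hx, hxpos⟩

lemma aux_finite {K V : Type*} [Field K] [AddCommGroup V] [Module K V] [FiniteDimensional K V]
    {m : ℕ} (r : Fin m → Submodule K V → ℕ) (hr : ∀ l W, r l W ≤ Module.finrank K V)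
    (p : Fin m → ℝ) :
    (Set.range fun W : Submodule K V =>
      ((Module.finrank K W : ℝ) - ∑ l, p l * r l W)).Finite := by
  have hfin : ((Set.Iic (Module.finrank K V)) ×ˢ
      (Set.pi Set.univ fun _ : Fin m => Set.Iic (Module.finrank K V))).Finite :=
    (Set.finite_Iic _).prod (Set.Finite.pi fun _ => Set.finite_Iic _)
  apply (hfin.image (fun t : ℕ × (Fin m → ℕ) => ((t.1 : ℝ) - ∑ l, p l * t.2 l))).subset
  rintro x ⟨W, rfl⟩
  exact ⟨(Module.finrank K W, fun l => r l W),
    ⟨Submodule.finrank_le W, fun l _ => hr l W⟩, rfl⟩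

lemma aux_map_bot {K V V2 : Type*} [Field K] [AddCommGroup V] [Module K V] [AddCommGroup V2]
    [Module K V2] (f : V →ₗ[K] V2) (L : Submodule K V) (h : L ≤ LinearMap.ker f) :
    L.map f = ⊥ := by
  rw [eq_bot_iff]
  rintro x ⟨v, hv, rfl⟩
  simpa using h hv

set_option maxHeartbeats 2000000 in
theorem BL_extreme_point_zero_one (K : Type*) [Field K] (m : ℕ)
    (V : Type*) [AddCommGroup V] [Module K V] [FiniteDimensional K V]
    (Vj : Fin m → Type*) [∀ j, AddCommGroup (Vj j)] [∀ j, Module K (Vj j)]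
    [∀ j, FiniteDimensional K (Vj j)]
    (B : ∀ j : Fin m, V →ₗ[K] Vj j)
    (Q : Set (Fin m → ℝ))
    (hQdef : Q = {q | (∀ j, 0 ≤ q j ∧ q j ≤ 1) ∧
      (∀ W : Submodule K V,
        ∑ j, q j * (Module.finrank K (W.map (B j)) : ℝ) ≤ Module.finrank K W) ∧
      ∑ j, q j * (Module.finrank K ((⊤ : Submodule K V).map (B j)) : ℝ)
        = Module.finrank K V})
    (p : Fin m → ℝ) (hp : p ∈ Q.extremePoints ℝ)
    (hcrit : ∀ W : Submodule K V, W ≠ ⊥ → W ≠ ⊤ →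
      ∑ j, p j * (Module.finrank K (W.map (B j)) : ℝ) ≠ Module.finrank K W) :
    ∀ j, p j = 0 ∨ p j = 1 := by
  classical
  obtain ⟨hpQ, hext⟩ := hp
  rw [hQdef] at hpQ
  obtain ⟨hbox, hineq, heq⟩ := hpQ
  have hrle : ∀ (l : Fin m) (W : Submodule K V),
      finrank K (W.map (B l)) ≤ finrank K ((⊤ : Submodule K V).map (B l)) :=
    fun l W => Submodule.finrank_mono (Submodule.map_mono le_top)
  have hrW : ∀ (l : Fin m) (W : Submodule K V), finrank K (W.map (B l)) ≤ finrank K W :=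
    fun l W => Submodule.finrank_map_le (B l) W
  have hrn : ∀ (l : Fin m) (W : Submodule K V), finrank K (W.map (B l)) ≤ finrank K V :=
    fun l W => le_trans (hrW l W) (Submodule.finrank_le W)
  have hdn : ∀ l : Fin m, finrank K ((⊤ : Submodule K V).map (B l)) ≤ finrank K V :=
    fun l => hrn l ⊤
  -- generic perturbation refutation
  have hpert : ∀ (v : Fin m → ℝ), v ≠ 0 →
      (∀ c : ℝ, -1 ≤ c → c ≤ 1 → (fun l => p l + c * v l) ∈ Q) → False := by
    intro v hv hmem
    have hxQ := hmem (-1) (by norm_num) (by norm_num)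
    have hyQ := hmem 1 (by norm_num) (by norm_num)
    have hseg : p ∈ openSegment ℝ (fun l => p l + (-1) * v l) (fun l => p l + 1 * v l) := by
      refine ⟨1/2, 1/2, by norm_num, by norm_num, by norm_num, ?_⟩
      funext l
      simp only [Pi.add_apply, Pi.smul_apply, smul_eq_mul]
      ring
    have hxp := hext hxQ hyQ hseg
    apply hv
    funext l
    have := congrFun hxp l
    simp only [Pi.zero_apply]
    linarith [this]
  -- key0: a strictly fractional coordinate must have positive rank
  have key0 : ∀ l : Fin m, 0 < p l → p l < 1 →
      0 < finrank K ((⊤ : Submodule K V).map (B l)) := by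
    intro l h0 h1
    by_contra hdl
    push_neg at hdl
    have hdl0 : finrank K ((⊤ : Submodule K V).map (B l)) = 0 := Nat.le_zero.mp hdl
    have hzero : ∀ W : Submodule K V, finrank K (W.map (B l)) = 0 :=
      fun W => Nat.le_zero.mp (hdl0 ▸ hrle l W)
    set ε := min (p l) (1 - p l) with hεdef
    have hεpos : 0 < ε := lt_min h0 (by linarith)
    set v : Fin m → ℝ := fun i => if i = l then ε else 0 with hvdef
    have hsum : ∀ (c : ℝ) (W : Submodule K V),
        ∑ i, (p i + c * v i) * (finrank K (W.map (B i)) : ℝ)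
          = ∑ i, p i * (finrank K (W.map (B i)) : ℝ) := by
      intro c W
      refine Finset.sum_congr rfl fun i _ => ?_
      by_cases hi : i = l
      · subst hi; rw [hzero W]; push_cast; ring
      · simp [hvdef, hi]
    refine hpert v ?_ ?_
    · intro h
      have := congrFun h l
      simp [hvdef] at this
      linarith
    · intro c hc1 hc2
      rw [hQdef]
      refine ⟨?_, ?_, ?_⟩
      · intro i
        by_cases hi : i = l
        · subst hi
          simp only [hvdef, if_pos rfl]
          have h2 : ε ≤ p i := min_le_left _ _
          have h3 : ε ≤ 1 - p i := min_le_right _ _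
          constructor
          · nlinarith
          · nlinarith
        · simp only [hvdef, if_neg hi, mul_zero, add_zero]
          exact hbox i
      · intro W
        show ∑ i, (p i + c * v i) * (finrank K (W.map (B i)) : ℝ) ≤ _
        rw [hsum]
        exact hineq W
      · show ∑ i, (p i + c * v i) * (finrank K (((⊤ : Submodule K V)).map (B i)) : ℝ) = _
        rw [hsum]
        exact heq
  intro j
  by_contra hj
  push_neg at hj
  obtain ⟨hj0, hj1⟩ := hj
  have hpj0 : 0 < p j := lt_of_le_of_ne (hbox j).1 (Ne.symm hj0)
  have hpj1 : p j < 1 := lt_of_le_of_ne (hbox j).2 hj1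
  have hdj : 0 < finrank K ((⊤ : Submodule K V).map (B j)) := key0 j hpj0 hpj1
  have hn : 0 < finrank K V := lt_of_lt_of_le hdj (hdn j)
  by_cases h2 : ∃ k, k ≠ j ∧ p k ≠ 0 ∧ p k ≠ 1
  · -- two fractional coordinates: perturbation along a direction preserving the equality
    obtain ⟨k, hkj, hk0', hk1'⟩ := h2
    have hpk0 : 0 < p k := lt_of_le_of_ne (hbox k).1 (Ne.symm hk0')
    have hpk1 : p k < 1 := lt_of_le_of_ne (hbox k).2 hk1'
    have hdk : 0 < finrank K ((⊤ : Submodule K V).map (B k)) := key0 k hpk0 hpk1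
    obtain ⟨δ, hδpos, hδlb⟩ := aux_pos_lb _ (aux_finite
      (fun l W => finrank K (W.map (B l))) (fun l W => hrn l W) p)
    have hslack : ∀ W : Submodule K V, W ≠ ⊥ → W ≠ ⊤ →
        δ ≤ (finrank K W : ℝ) - ∑ l, p l * (finrank K (W.map (B l)) : ℝ) := by
      intro W hb ht
      refine hδlb _ ⟨W, rfl⟩ ?_
      have ha := hineq W
      have hb2 := hcrit W hb ht
      have : ∑ l, p l * (finrank K (W.map (B l)) : ℝ) < finrank K W := lt_of_le_of_ne ha hb2
      linarith
    have hdjpos : (0:ℝ) < (finrank K ((⊤ : Submodule K V).map (B j)) : ℝ) := by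
      exact_mod_cast hdj
    have hdkpos : (0:ℝ) < (finrank K ((⊤ : Submodule K V).map (B k)) : ℝ) := by
      exact_mod_cast hdk
    have hdjn : (finrank K ((⊤ : Submodule K V).map (B j)) : ℝ) ≤ (finrank K V : ℝ) := by
      exact_mod_cast hdn j
    have hdkn : (finrank K ((⊤ : Submodule K V).map (B k)) : ℝ) ≤ (finrank K V : ℝ) := by
      exact_mod_cast hdn k
    have hnpos : (0:ℝ) < (finrank K V : ℝ) := by exact_mod_cast hn
    obtain ⟨A, hA1, hA2, hA3, hA4, hApos⟩ : ∃ A : ℝ, A ≤ p j ∧ A ≤ 1 - p j ∧ A ≤ p k ∧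
        A ≤ 1 - p k ∧ 0 < A := by
      refine ⟨min (min (p j) (1 - p j)) (min (p k) (1 - p k)), ?_, ?_, ?_, ?_, ?_⟩
      · exact le_trans (min_le_left _ _) (min_le_left _ _)
      · exact le_trans (min_le_left _ _) (min_le_right _ _)
      · exact le_trans (min_le_right _ _) (min_le_left _ _)
      · exact le_trans (min_le_right _ _) (min_le_right _ _)
      · exact lt_min (lt_min hpj0 (by linarith)) (lt_min hpk0 (by linarith))
    obtain ⟨ε, hεpos, hεn2, hεnA⟩ : ∃ ε : ℝ, 0 < ε ∧
        ε * ((finrank K V : ℝ) * (finrank K V : ℝ)) < δ ∧ ε * (finrank K V : ℝ) < A := by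
      refine ⟨min (δ / ((finrank K V : ℝ) * (finrank K V : ℝ) + 1)) (A / ((finrank K V : ℝ) + 1)),
        ?_, ?_, ?_⟩
      · exact lt_min (div_pos hδpos (by positivity)) (div_pos hApos (by positivity))
      · have h1 : min (δ / ((finrank K V : ℝ) * (finrank K V : ℝ) + 1)) (A / ((finrank K V : ℝ) + 1))
            ≤ δ / ((finrank K V : ℝ) * (finrank K V : ℝ) + 1) := min_le_left _ _
        have h0 : 0 < min (δ / ((finrank K V : ℝ) * (finrank K V : ℝ) + 1)) (A / ((finrank K V : ℝ) + 1)) :=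
          lt_min (div_pos hδpos (by positivity)) (div_pos hApos (by positivity))
        have h2 := (le_div_iff₀ (show (0:ℝ) < (finrank K V : ℝ) * (finrank K V : ℝ) + 1 by positivity)).mp h1
        nlinarith
      · have h1 : min (δ / ((finrank K V : ℝ) * (finrank K V : ℝ) + 1)) (A / ((finrank K V : ℝ) + 1))
            ≤ A / ((finrank K V : ℝ) + 1) := min_le_right _ _
        have h0 : 0 < min (δ / ((finrank K V : ℝ) * (finrank K V : ℝ) + 1)) (A / ((finrank K V : ℝ) + 1)) :=
          lt_min (div_pos hδpos (by positivity)) (div_pos hApos (by positivity))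
        have h2 := (le_div_iff₀ (show (0:ℝ) < (finrank K V : ℝ) + 1 by positivity)).mp h1
        nlinarith
    set v : Fin m → ℝ := fun l => if l = j then ε * (finrank K ((⊤ : Submodule K V).map (B k)) : ℝ)
      else if l = k then -(ε * (finrank K ((⊤ : Submodule K V).map (B j)) : ℝ)) else 0 with hv
    have hsum : ∀ (c : ℝ) (W : Submodule K V),
        ∑ l, (p l + c * v l) * (finrank K (W.map (B l)) : ℝ)
          = (∑ l, p l * (finrank K (W.map (B l)) : ℝ))
            + c * ε * ((finrank K ((⊤ : Submodule K V).map (B k)) : ℝ) * (finrank K (W.map (B j)) : ℝ)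
              - (finrank K ((⊤ : Submodule K V).map (B j)) : ℝ) * (finrank K (W.map (B k)) : ℝ)) := by
      intro c W
      have e1 : ∑ l, (p l + c * v l) * (finrank K (W.map (B l)) : ℝ)
          = ∑ l, (p l * (finrank K (W.map (B l)) : ℝ)
            + (c * v l) * (finrank K (W.map (B l)) : ℝ)) :=
        Finset.sum_congr rfl fun l _ => by ring
      rw [e1, Finset.sum_add_distrib]
      congr 1
      have e2 : ∑ l, (c * v l) * (finrank K (W.map (B l)) : ℝ)
          = ∑ l ∈ ({j, k} : Finset (Fin m)), (c * v l) * (finrank K (W.map (B l)) : ℝ) := by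
        symm
        apply Finset.sum_subset (Finset.subset_univ _)
        intro l _ hl
        simp only [Finset.mem_insert, Finset.mem_singleton] at hl
        push_neg at hl
        simp [hv, hl.1, hl.2]
      rw [e2, Finset.sum_pair (Ne.symm hkj)]
      simp [hv, hkj]
      ring
    have hmem : ∀ c : ℝ, -1 ≤ c → c ≤ 1 → (fun l => p l + c * v l) ∈ Q := by
      intro c hc1 hc2
      rw [hQdef]
      refine ⟨?_, ?_, ?_⟩
      · intro i
        by_cases hi : i = j
        · subst hi
          simp [hv]
          have h3 : ε * (finrank K ((⊤ : Submodule K V).map (B k)) : ℝ)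
              ≤ ε * (finrank K V : ℝ) := mul_le_mul_of_nonneg_left hdkn hεpos.le
          have h6 : 0 < ε * (finrank K ((⊤ : Submodule K V).map (B k)) : ℝ) :=
            mul_pos hεpos hdkpos
          have h7 : -1 * (ε * (finrank K ((⊤ : Submodule K V).map (B k)) : ℝ))
              ≤ c * (ε * (finrank K ((⊤ : Submodule K V).map (B k)) : ℝ)) :=
            mul_le_mul_of_nonneg_right hc1 h6.le
          have h8 : c * (ε * (finrank K ((⊤ : Submodule K V).map (B k)) : ℝ))
              ≤ 1 * (ε * (finrank K ((⊤ : Submodule K V).map (B k)) : ℝ)) :=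
            mul_le_mul_of_nonneg_right hc2 h6.le
          constructor
          · linarith
          · linarith
        · by_cases hi2 : i = k
          · subst hi2
            simp [hv, hi]
            have h3 : ε * (finrank K ((⊤ : Submodule K V).map (B j)) : ℝ)
                ≤ ε * (finrank K V : ℝ) := mul_le_mul_of_nonneg_left hdjn hεpos.le
            have h6 : 0 < ε * (finrank K ((⊤ : Submodule K V).map (B j)) : ℝ) :=
              mul_pos hεpos hdjpos
            have h7 : -1 * (ε * (finrank K ((⊤ : Submodule K V).map (B j)) : ℝ))
                ≤ c * (ε * (finrank K ((⊤ : Submodule K V).map (B j)) : ℝ)) :=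
              mul_le_mul_of_nonneg_right hc1 h6.le
            have h8 : c * (ε * (finrank K ((⊤ : Submodule K V).map (B j)) : ℝ))
                ≤ 1 * (ε * (finrank K ((⊤ : Submodule K V).map (B j)) : ℝ)) :=
              mul_le_mul_of_nonneg_right hc2 h6.le
            constructor
            · linarith
            · linarith
          · simp only [hv, if_neg hi, if_neg hi2, mul_zero, add_zero]
            exact hbox i
      · intro W
        show ∑ l, (p l + c * v l) * (finrank K (W.map (B l)) : ℝ) ≤ _
        rw [hsum]
        by_cases hb : W = ⊥
        · subst hb
          have hmb : ∀ l : Fin m, ((finrank K ((⊥ : Submodule K V).map (B l)) : ℝ)) = 0 :=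
            fun l => by rw [Submodule.map_bot, finrank_bot]; norm_num
          simp [hmb, finrank_bot]
        · by_cases ht : W = ⊤
          · subst ht
            rw [finrank_top]
            have hz : c * ε * ((finrank K ((⊤ : Submodule K V).map (B k)) : ℝ)
                * (finrank K ((⊤ : Submodule K V).map (B j)) : ℝ)
              - (finrank K ((⊤ : Submodule K V).map (B j)) : ℝ)
                * (finrank K ((⊤ : Submodule K V).map (B k)) : ℝ)) = 0 := by ring
            linarith [heq, hz]
          · have hsl := hslack W hb ht
            have hrjn : (finrank K (W.map (B j)) : ℝ) ≤ (finrank K V : ℝ) := by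
              exact_mod_cast hrn j W
            have hrkn : (finrank K (W.map (B k)) : ℝ) ≤ (finrank K V : ℝ) := by
              exact_mod_cast hrn k W
            have hrj0 : (0:ℝ) ≤ (finrank K (W.map (B j)) : ℝ) := Nat.cast_nonneg _
            have hrk0 : (0:ℝ) ≤ (finrank K (W.map (B k)) : ℝ) := Nat.cast_nonneg _
            have hm1 : (finrank K ((⊤ : Submodule K V).map (B k)) : ℝ) * (finrank K (W.map (B j)) : ℝ)
                ≤ (finrank K V : ℝ) * (finrank K V : ℝ) :=
              mul_le_mul hdkn hrjn hrj0 hnpos.le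
            have hm2 : (finrank K ((⊤ : Submodule K V).map (B j)) : ℝ) * (finrank K (W.map (B k)) : ℝ)
                ≤ (finrank K V : ℝ) * (finrank K V : ℝ) :=
              mul_le_mul hdjn hrkn hrk0 hnpos.le
            have hm3 : (0:ℝ) ≤ (finrank K ((⊤ : Submodule K V).map (B k)) : ℝ) * (finrank K (W.map (B j)) : ℝ) :=
              mul_nonneg hdkpos.le hrj0
            have hm4 : (0:ℝ) ≤ (finrank K ((⊤ : Submodule K V).map (B j)) : ℝ) * (finrank K (W.map (B k)) : ℝ) :=
              mul_nonneg hdjpos.le hrk0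
            have h3 : c * ((finrank K ((⊤ : Submodule K V).map (B k)) : ℝ) * (finrank K (W.map (B j)) : ℝ)
                - (finrank K ((⊤ : Submodule K V).map (B j)) : ℝ) * (finrank K (W.map (B k)) : ℝ))
                ≤ (finrank K V : ℝ) * (finrank K V : ℝ) := by
              have habs : |c * ((finrank K ((⊤ : Submodule K V).map (B k)) : ℝ) * (finrank K (W.map (B j)) : ℝ)
                  - (finrank K ((⊤ : Submodule K V).map (B j)) : ℝ) * (finrank K (W.map (B k)) : ℝ))|
                  ≤ 1 * ((finrank K V : ℝ) * (finrank K V : ℝ)) := by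
                rw [abs_mul]
                exact mul_le_mul (abs_le.mpr ⟨hc1, hc2⟩)
                  (abs_le.mpr ⟨by linarith, by linarith⟩) (abs_nonneg _) one_pos.le
              calc c * ((finrank K ((⊤ : Submodule K V).map (B k)) : ℝ) * (finrank K (W.map (B j)) : ℝ)
                  - (finrank K ((⊤ : Submodule K V).map (B j)) : ℝ) * (finrank K (W.map (B k)) : ℝ))
                  ≤ |c * ((finrank K ((⊤ : Submodule K V).map (B k)) : ℝ) * (finrank K (W.map (B j)) : ℝ)
                  - (finrank K ((⊤ : Submodule K V).map (B j)) : ℝ) * (finrank K (W.map (B k)) : ℝ))| :=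
                    le_abs_self _
                _ ≤ 1 * ((finrank K V : ℝ) * (finrank K V : ℝ)) := habs
                _ = (finrank K V : ℝ) * (finrank K V : ℝ) := one_mul _
            have h4 : ε * (c * ((finrank K ((⊤ : Submodule K V).map (B k)) : ℝ) * (finrank K (W.map (B j)) : ℝ)
                - (finrank K ((⊤ : Submodule K V).map (B j)) : ℝ) * (finrank K (W.map (B k)) : ℝ)))
                ≤ ε * ((finrank K V : ℝ) * (finrank K V : ℝ)) :=
              mul_le_mul_of_nonneg_left h3 hεpos.le
            have h5 : c * ε * ((finrank K ((⊤ : Submodule K V).map (B k)) : ℝ) * (finrank K (W.map (B j)) : ℝ)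
                - (finrank K ((⊤ : Submodule K V).map (B j)) : ℝ) * (finrank K (W.map (B k)) : ℝ))
                = ε * (c * ((finrank K ((⊤ : Submodule K V).map (B k)) : ℝ) * (finrank K (W.map (B j)) : ℝ)
                - (finrank K ((⊤ : Submodule K V).map (B j)) : ℝ) * (finrank K (W.map (B k)) : ℝ))) := by
              ring
            linarith
      · show ∑ l, (p l + c * v l) * (finrank K ((⊤ : Submodule K V).map (B l)) : ℝ) = _
        rw [hsum]
        have hz : c * ε * ((finrank K ((⊤ : Submodule K V).map (B k)) : ℝ)
            * (finrank K ((⊤ : Submodule K V).map (B j)) : ℝ)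
          - (finrank K ((⊤ : Submodule K V).map (B j)) : ℝ)
            * (finrank K ((⊤ : Submodule K V).map (B k)) : ℝ)) = 0 := by ring
        linarith [heq, hz]
    refine hpert v ?_ hmem
    intro h
    have h0 : ε * (finrank K ((⊤ : Submodule K V).map (B k)) : ℝ) = 0 := by
      simpa [hv] using congrFun h j
    exact absurd h0 (ne_of_gt (mul_pos hεpos hdkpos))
  · -- exactly one fractional coordinate
    push_neg at h2
    have h2' : ∀ l, l ≠ j → p l = 0 ∨ p l = 1 := by
      intro l hl
      by_cases h : p l = 0
      · exact Or.inl h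
      · exact Or.inr (h2 l hl h)
    by_cases hker : LinearMap.ker (B j) = ⊥
    · -- B j injective
      have hdjn : finrank K ((⊤ : Submodule K V).map (B j)) = finrank K V := by
        rw [Submodule.map_top]
        have h := LinearMap.finrank_range_add_finrank_ker (B j)
        rw [hker, finrank_bot] at h
        omega
      have hex : ∃ k, p k = 1 ∧ 0 < finrank K ((⊤ : Submodule K V).map (B k)) := by
        by_contra hno
        push_neg at hno
        have hsum1 : ∑ l, p l * (finrank K ((⊤ : Submodule K V).map (B l)) : ℝ)
            = p j * (finrank K ((⊤ : Submodule K V).map (B j)) : ℝ) := by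
          refine Finset.sum_eq_single j (fun l _ hl => ?_)
            (fun h => absurd (Finset.mem_univ j) h)
          rcases h2' l hl with h | h
          · rw [h, zero_mul]
          · have h0 : finrank K ((⊤ : Submodule K V).map (B l)) = 0 := by
              have := hno l h
              omega
            rw [h0]
            push_cast
            ring
        rw [hsum1, hdjn] at heq
        have hnn : (0:ℝ) < (finrank K V : ℝ) := by exact_mod_cast hn
        nlinarith
      obtain ⟨k, hpk1, hdk⟩ := hex
      have hkj : k ≠ j := fun h => hj1 (h ▸ hpk1)
      have hexv : ∃ w : V, B k w ≠ 0 := by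
        by_contra hall
        push_neg at hall
        have hbk : (⊤ : Submodule K V).map (B k) = ⊥ := by
          rw [Submodule.map_top, LinearMap.range_eq_bot]
          exact LinearMap.ext hall
        rw [hbk, finrank_bot] at hdk
        omega
      obtain ⟨w, hw⟩ := hexv
      have hw0 : w ≠ 0 := fun h => hw (by rw [h, map_zero])
      set L := Submodule.span K {w} with hL
      have hL1 : finrank K L = 1 := finrank_span_singleton hw0
      have hLk : finrank K (L.map (B k)) = 1 := by
        rw [hL, Submodule.map_span, Set.image_singleton]
        exact finrank_span_singleton hw
      have hBjw : B j w ≠ 0 := by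
        intro h
        have hmem : w ∈ LinearMap.ker (B j) := h
        rw [hker, Submodule.mem_bot] at hmem
        exact hw0 hmem
      have hLj : finrank K (L.map (B j)) = 1 := by
        rw [hL, Submodule.map_span, Set.image_singleton]
        exact finrank_span_singleton hBjw
      have hge : ∑ l ∈ ({k, j} : Finset (Fin m)), p l * (finrank K (L.map (B l)) : ℝ)
          ≤ ∑ l, p l * (finrank K (L.map (B l)) : ℝ) :=
        Finset.sum_le_sum_of_subset_of_nonneg (Finset.subset_univ _)
          (fun l _ _ => mul_nonneg (hbox l).1 (Nat.cast_nonneg _))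
      rw [Finset.sum_pair hkj, hLk, hLj, hpk1] at hge
      have hle := hineq L
      rw [hL1] at hle
      push_cast at hge hle
      linarith
    · -- ker (B j) ≠ ⊥ : pick a line in the kernel and its complement
      obtain ⟨w, hwN, hw0⟩ := Submodule.exists_mem_ne_zero_of_ne_bot hker
      set L := Submodule.span K {w} with hL
      have hLN : L ≤ LinearMap.ker (B j) := by
        rw [hL, Submodule.span_le, Set.singleton_subset_iff]
        exact hwN
      have hL1 : finrank K L = 1 := finrank_span_singleton hw0
      have hLbot : L ≠ ⊥ := by
        rw [hL, Ne, Submodule.span_singleton_eq_bot]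
        exact hw0
      have hLtop : L ≠ ⊤ := by
        intro h
        have hkt : LinearMap.ker (B j) = ⊤ := top_unique (h ▸ hLN)
        have hbj : (⊤ : Submodule K V).map (B j) = ⊥ := by
          rw [Submodule.map_top, LinearMap.range_eq_bot]
          exact LinearMap.ker_eq_top.mp hkt
        rw [hbj, finrank_bot] at hdj
        omega
      have hlt : ∑ l, p l * (finrank K (L.map (B l)) : ℝ) < 1 := by
        have ha := hineq L
        have hb := hcrit L hLbot hLtop
        rw [hL1] at ha hb
        push_cast at ha hb
        exact lt_of_le_of_ne ha hb
      have hker2 : ∀ l, p l = 1 → L.map (B l) = ⊥ := by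
        intro l hl
        have hterm : p l * (finrank K (L.map (B l)) : ℝ)
            ≤ ∑ i, p i * (finrank K (L.map (B i)) : ℝ) :=
          Finset.single_le_sum (f := fun i => p i * (finrank K (L.map (B i)) : ℝ))
            (fun i _ => mul_nonneg (hbox i).1 (Nat.cast_nonneg _)) (Finset.mem_univ l)
        rw [hl, one_mul] at hterm
        have hlt1 : (finrank K (L.map (B l)) : ℝ) < 1 := lt_of_le_of_lt hterm hlt
        have h0 : finrank K (L.map (B l)) = 0 := by
          have : finrank K (L.map (B l)) < 1 := by exact_mod_cast hlt1
          omega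
        exact Submodule.finrank_eq_zero.mp h0
      have hjmap : L.map (B j) = ⊥ := aux_map_bot (B j) L hLN
      obtain ⟨W, hWc⟩ := Submodule.exists_isCompl L
      have hWr : finrank K L + finrank K W = finrank K V :=
        Submodule.finrank_add_eq_of_isCompl hWc
      have hmapW : ∀ l, L.map (B l) = ⊥ → W.map (B l) = (⊤ : Submodule K V).map (B l) := by
        intro l hl
        conv_rhs => rw [← hWc.sup_eq_top]
        rw [Submodule.map_sup, hl, bot_sup_eq]
      have hsumW : ∑ l, p l * (finrank K (W.map (B l)) : ℝ)
          = ∑ l, p l * (finrank K ((⊤ : Submodule K V).map (B l)) : ℝ) := by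
        refine Finset.sum_congr rfl fun l _ => ?_
        by_cases hlj : l = j
        · subst hlj
          rw [hmapW l hjmap]
        · rcases h2' l hlj with h | h
          · rw [h, zero_mul, zero_mul]
          · rw [hmapW l (hker2 l h)]
      have hWle := hineq W
      rw [hsumW, heq] at hWle
      have hfin : finrank K V ≤ finrank K W := by exact_mod_cast hWle
      omega
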